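/- Let β ∈ (0,1), κ > 0, κ_g > 0, κ_B > 0, σ_min > 0, and let σ ≥ σ_min. Suppose g, e, s are nonnegative reals with e ≤ κ(1−β)²(g/σ)², g ≤ κ_g, and s² ≥ (1−β)·g/(κ_B+σ). Then e ≤ κ·(κ_g/σ_min)·(κ_B/σ_min + 1)·s². -/

import Mathlib

theorem stmt_1 (β κ κg κB σmin σ g e s : ℝ)
    (hβ : 0 < β) (hβ1 : β < 1) (hκ : 0 < κ) (hκg : 0 < κg) (hκB : 0 < κB)
    (hσmin : 0 < σmin) (hσ : σmin ≤ σ)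
    (hg : 0 ≤ g) (he : 0 ≤ e) (hs : 0 ≤ s)
    (hacc : e ≤ κ * (1 - β) ^ 2 * (g / σ) ^ 2)
    (hgb : g ≤ κg)
    (hstep : s ^ 2 ≥ (1 - β) * g / (κB + σ)) :
    e ≤ κ * (κg / σmin) * (κB / σmin + 1) * s ^ 2 := by
  have hσ0 : (0:ℝ) < σ := lt_of_lt_of_le hσmin hσ
  have hKS : (0:ℝ) < κB + σ := by linarith
  have h1 : (1 - β) * g ≤ s ^ 2 * (κB + σ) := by
    rw [ge_iff_le, div_le_iff₀ hKS] at hstep; linarith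
  have hβ' : (0:ℝ) ≤ 1 - β := by linarith
  have h2 : e ≤ κ * ((1 - β) * g) ^ 2 / σ ^ 2 := by
    rw [div_pow] at hacc
    calc e ≤ κ * (1 - β) ^ 2 * (g ^ 2 / σ ^ 2) := hacc
      _ = κ * ((1 - β) * g) ^ 2 / σ ^ 2 := by ring
  have h3 : ((1 - β) * g) ^ 2 ≤ (s ^ 2 * (κB + σ)) * ((1 - β) * g) := by
    nlinarith [mul_nonneg hβ' hg]
  have h4 : e ≤ κ * ((s ^ 2 * (κB + σ)) * ((1 - β) * g)) / σ ^ 2 := by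
    apply le_trans h2
    apply div_le_div_of_nonneg_right _ (by positivity)
    exact mul_le_mul_of_nonneg_left h3 hκ.le
  apply le_trans h4
  rw [div_le_iff₀ (by positivity : (0:ℝ) < σ ^ 2)]
  have hκgσ : (1 - β) * g ≤ κg := by nlinarith
  have key : (κB + σ) * σmin ^ 2 ≤ (κB + σmin) * σ ^ 2 := by
    nlinarith [mul_nonneg hκB.le (mul_nonneg (sub_nonneg.2 hσ) (by positivity : (0:ℝ) ≤ σ + σmin)),
      mul_nonneg (mul_nonneg hσmin.le hσ0.le) (sub_nonneg.2 hσ)]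
  rw [show κ * (κg / σmin) * (κB / σmin + 1) * s ^ 2 * σ ^ 2
      = κ * (κg * ((κB + σmin) * σ ^ 2)) * s ^ 2 / σmin ^ 2 by field_simp,
    le_div_iff₀ (by positivity : (0:ℝ) < σmin ^ 2)]
  have hprod : ((1 - β) * g) * ((κB + σ) * σmin ^ 2) ≤ κg * ((κB + σmin) * σ ^ 2) :=
    mul_le_mul hκgσ key (by positivity) hκg.le
  nlinarith [mul_le_mul_of_nonneg_left hprod (mul_nonneg hκ.le (sq_nonneg s))]
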